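/- Let L be a quasi-unimodular lattice and let 𝒲 = {w_1,...,w_7} ⊆ L be primitive elements whose images under the adjoint map L → Hom(L,ℤ) are ℚ-linearly independent. Then the natural map ⨁_{𝒲'⊆𝒲, |𝒲'|=4} Λ³((𝒲')^⊥ ⊗ ℚ) → Λ³(L ⊗ ℚ) is surjective. -/

import Mathlib

open TensorProduct

/-- An element of a (free abelian) lattice is primitive if it is not a multiple `m • w`
with `m ≥ 2` and `w ≠ 0`. -/
def IsPrimitive {L : Type*} [AddCommGroup L] (v : L) : Prop :=
  ¬ ∃ (m : ℤ) (w : L), 2 ≤ m ∧ w ≠ 0 ∧ v = m • w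

/-- Clearing denominators in `ℚ ⊗[ℤ] L`. -/
lemma exists_int_smul_eq_tmul {L : Type*} [AddCommGroup L] (x : ℚ ⊗[ℤ] L) :
    ∃ (n : ℤ) (y : L), n ≠ 0 ∧ (n : ℚ) • x = (1 : ℚ) ⊗ₜ[ℤ] y := by
  induction x with
  | zero => exact ⟨1, 0, one_ne_zero, by simp⟩
  | tmul q l =>
      refine ⟨(q.den : ℤ), q.num • l, by exact_mod_cast q.den_nz, ?_⟩
      have h1 : ((q.den : ℤ) : ℚ) • q = q.num • (1 : ℚ) := by
        rw [smul_eq_mul, zsmul_eq_mul, mul_one, mul_comm]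
        exact_mod_cast Rat.mul_den_eq_num q
      rw [smul_tmul', h1, TensorProduct.smul_tmul]
  | add a b ha hb =>
      obtain ⟨n, y, hn, hy⟩ := ha
      obtain ⟨m, z, hm, hz⟩ := hb
      refine ⟨n * m, m • y + n • z, mul_ne_zero hn hm, ?_⟩
      rw [smul_add, tmul_add, tmul_smul, tmul_smul,
        ← Int.cast_smul_eq_zsmul ℚ m (1 ⊗ₜ y), ← Int.cast_smul_eq_zsmul ℚ n (1 ⊗ₜ z),
        ← hy, ← hz]
      push_cast
      module

/-- Expanding a multilinear map over a spanning set. -/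
lemma multilinear_mem_of_span {V W : Type*} [AddCommGroup V] [Module ℚ V]
    [AddCommGroup W] [Module ℚ W]
    (g : MultilinearMap ℚ (fun _ : Fin 3 => V) W) (G : Set V) (P : Submodule ℚ W)
    (h : ∀ u : Fin 3 → V, (∀ j, u j ∈ G) → g u ∈ P)
    (u : Fin 3 → V) (hu : ∀ j, u j ∈ Submodule.span ℚ G) : g u ∈ P := by
  choose n c mm hmm using fun j => (Submodule.mem_span_set').1 (hu j)
  have hue : u = fun j => ∑ i ∈ Finset.univ, c j i • (mm j i : V) :=
    funext fun j => by rw [← hmm j]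
  rw [hue, g.map_sum_finset]
  refine Submodule.sum_mem _ fun r _ => ?_
  rw [g.map_smul_univ]
  exact Submodule.smul_mem _ _ (h _ fun j => (mm j (r j)).2)

/-- The image of the `n`-th exterior power under a map of exterior algebras is contained in the
`n`-th exterior power. -/
lemma map_exteriorPower_le {R M N : Type*} [CommRing R] [AddCommGroup M] [Module R M]
    [AddCommGroup N] [Module R N] (f : M →ₗ[R] N) (n : ℕ) :
    Submodule.map (ExteriorAlgebra.map f).toLinearMap (⋀[R]^n M) ≤ ⋀[R]^n N := by
  rw [← ExteriorAlgebra.ιMulti_span_fixedDegree R n (M := M), Submodule.map_span,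
    Submodule.span_le]
  rintro x ⟨y, ⟨u, rfl⟩, rfl⟩
  exact (ExteriorAlgebra.ιMulti_range R n) ⟨f ∘ u, (ExteriorAlgebra.map_apply_ιMulti f u).symm⟩

set_option maxHeartbeats 1600000 in
set_option synthInstance.maxHeartbeats 400000 in
theorem stmt_4 (L : Type*) [AddCommGroup L] [Module ℤ L] [Module.Free ℤ L]
    [Module.Finite ℤ L]
    (B : L →ₗ[ℤ] L →ₗ[ℤ] ℤ) (hB : ∀ x, B x x = 0)
    (w : Fin 7 → L) (hw : ∀ i, IsPrimitive (w i))
    (hind : LinearIndependent ℚ (fun i => (Algebra.linearMap ℤ ℚ) ∘ₗ B (w i))) :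
    ⨆ (S : Finset (Fin 7)) (_ : S.card = 4),
        Submodule.map
          (ExteriorAlgebra.map
            ((⨅ i ∈ S, LinearMap.ker (B (w i))).baseChange ℚ).subtype).toLinearMap
          (⋀[ℚ]^3 ↥((⨅ i ∈ S, LinearMap.ker (B (w i))).baseChange ℚ)) =
      ⋀[ℚ]^3 (ℚ ⊗[ℤ] L) := by
  classical
  obtain rfl := (AddCommGroup.uniqueIntModule (M := L)).uniq ‹Module ℤ L›
  set f : Fin 7 → (L →ₗ[ℤ] ℚ) := fun i => (Algebra.linearMap ℤ ℚ) ∘ₗ B (w i) with hf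
  set φ : Fin 7 → ((ℚ ⊗[ℤ] L) →ₗ[ℚ] ℚ) := fun i => (f i).liftBaseChange ℚ with hφ
  have hφind : LinearIndependent ℚ φ :=
    hind.map' (LinearMap.liftBaseChangeEquiv ℚ).toLinearMap (LinearEquiv.ker _)
  -- membership in the base-changed kernels
  have hmemN : ∀ (S : Finset (Fin 7)) (x : ℚ ⊗[ℤ] L), (∀ i ∈ S, φ i x = 0) →
      x ∈ (⨅ i ∈ S, LinearMap.ker (B (w i))).baseChange ℚ := by
    intro S x hx
    obtain ⟨n, y, hn, hxy⟩ := exists_int_smul_eq_tmul x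
    have hy : y ∈ ⨅ i ∈ S, LinearMap.ker (B (w i)) := by
      simp only [Submodule.mem_iInf, LinearMap.mem_ker]
      intro i hi
      have h1 : φ i ((n : ℚ) • x) = 0 := by rw [map_smul, hx i hi, smul_zero]
      rw [hxy] at h1
      have h2 : ((B (w i) y : ℤ) : ℚ) = 0 := by
        simpa [hφ, hf, LinearMap.liftBaseChange_tmul] using h1
      exact_mod_cast h2
    have h3 : (1 : ℚ) ⊗ₜ[ℤ] y ∈ (⨅ i ∈ S, LinearMap.ker (B (w i))).baseChange ℚ :=
      Submodule.tmul_mem_baseChange_of_mem 1 hy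
    have h4 : x = ((n : ℚ)⁻¹) • ((1 : ℚ) ⊗ₜ[ℤ] y) := by
      rw [← hxy, smul_smul, inv_mul_cancel₀ (by exact_mod_cast hn), one_smul]
    rw [h4]
    exact Submodule.smul_mem _ _ h3
  -- surjectivity of the joint functional map
  have hsurj : Function.Surjective (LinearMap.pi φ) := by
    rw [← LinearMap.range_eq_top]
    by_contra hne
    obtain ⟨ψ, hψ0, hψ⟩ := Submodule.exists_dual_map_eq_bot_of_lt_top
      (lt_top_iff_ne_top.2 hne) inferInstance
    have hz : ∀ x, ψ (LinearMap.pi φ x) = 0 := by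
      intro x
      have hmem : ψ (LinearMap.pi φ x) ∈ (LinearMap.range (LinearMap.pi φ)).map ψ :=
        Submodule.mem_map_of_mem (LinearMap.mem_range_self _ x)
      rw [hψ] at hmem
      exact (Submodule.mem_bot ℚ).1 hmem
    have h0 : (∑ i, ψ (fun j => if i = j then (1:ℚ) else 0) • φ i) = 0 := by
      refine LinearMap.ext fun x => ?_
      have hx := hz x
      rw [LinearMap.pi_apply_eq_sum_univ ψ (LinearMap.pi φ x)] at hx
      simpa [LinearMap.pi_apply, mul_comm] using hx
    have hc := Fintype.linearIndependent_iff.1 hφind _ h0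
    refine hψ0 (LinearMap.ext fun y => ?_)
    rw [LinearMap.pi_apply_eq_sum_univ ψ y]
    simp only [LinearMap.zero_apply]
    exact Finset.sum_eq_zero fun i _ => by rw [hc i, smul_zero]
  -- dual family
  have hvex : ∃ v : Fin 7 → ℚ ⊗[ℤ] L, ∀ i j, φ i (v j) = if i = j then 1 else 0 := by
    choose v hv using fun j => hsurj (Pi.single j 1)
    refine ⟨v, fun i j => ?_⟩
    have := congrFun (hv j) i
    rwa [LinearMap.pi_apply, Pi.single_apply] at this
  obtain ⟨v, hv⟩ := hvex
  set K : Submodule ℚ (ℚ ⊗[ℤ] L) := ⨅ i, LinearMap.ker (φ i) with hK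
  have hGspan : Submodule.span ℚ (Set.range v ∪ (K : Set (ℚ ⊗[ℤ] L))) = ⊤ := by
    rw [eq_top_iff]
    intro x _
    have hxK : x - ∑ i, φ i x • v i ∈ K := by
      simp only [hK, Submodule.mem_iInf, LinearMap.mem_ker, map_sub, map_sum, map_smul]
      intro j
      rw [sub_eq_zero]
      rw [Finset.sum_eq_single j]
      · rw [hv j j]; simp
      · intro i _ hij
        rw [hv j i, if_neg (fun h => hij h.symm), smul_eq_mul, mul_zero]
      · intro h; exact absurd (Finset.mem_univ j) h
    have hrw : x = (∑ i, φ i x • v i) + (x - ∑ i, φ i x • v i) := by abel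
    rw [hrw]
    refine Submodule.add_mem _
      (Submodule.sum_mem _ fun i _ =>
        Submodule.smul_mem _ _ (Submodule.subset_span (Or.inl ⟨i, rfl⟩)))
      (Submodule.subset_span (Or.inr hxK))
  refine le_antisymm (iSup_le fun S => iSup_le fun _ => map_exteriorPower_le _ 3) ?_
  rw [← ExteriorAlgebra.ιMulti_span_fixedDegree, Submodule.span_le]
  rintro x ⟨u, rfl⟩
  refine multilinear_mem_of_span (ExteriorAlgebra.ιMulti ℚ 3).toMultilinearMap
    (Set.range v ∪ (K : Set (ℚ ⊗[ℤ] L))) _ ?_ u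
    (fun j => by rw [hGspan]; exact Submodule.mem_top)
  intro m hm
  have hcase : ∀ j, m j ∈ K ∨ ∃ i, m j = v i := by
    intro j
    rcases hm j with h | h
    · obtain ⟨i, hi⟩ := h
      exact Or.inr ⟨i, hi.symm⟩
    · exact Or.inl h
  let t : Fin 3 → Fin 7 := fun j => if h : ∃ i, m j = v i then h.choose else 0
  have htm : ∀ j, m j ∈ K ∨ m j = v (t j) := by
    intro j
    rcases hcase j with h | h
    · exact Or.inl h
    · right
      simp only [t, dif_pos h]
      exact h.choose_spec
  set T : Finset (Fin 7) := Finset.image t Finset.univ with hT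
  have hTcard : T.card ≤ 3 := le_trans Finset.card_image_le (by simp)
  obtain ⟨S, hST, hScard⟩ : ∃ S ⊆ Tᶜ, S.card = 4 := by
    refine Finset.exists_subset_card_eq ?_
    have := Finset.card_compl T (α := Fin 7)
    simp only [Fintype.card_fin] at this
    omega
  have hzero : ∀ j, ∀ i ∈ S, φ i (m j) = 0 := by
    intro j i hiS
    have hiT : i ∉ T := Finset.mem_compl.1 (hST hiS)
    rcases htm j with h | h
    · exact (Submodule.mem_iInf _).1 h i
    · rw [h, hv i (t j), if_neg]
      intro hE
      exact hiT (hE ▸ Finset.mem_image_of_mem t (Finset.mem_univ j))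
  have hmN : ∀ j, m j ∈ (⨅ i ∈ S, LinearMap.ker (B (w i))).baseChange ℚ :=
    fun j => hmemN S (m j) (fun i hi => hzero j i hi)
  set N := (⨅ i ∈ S, LinearMap.ker (B (w i))).baseChange ℚ with hN
  let mS : Fin 3 → N := fun j => ⟨m j, hmN j⟩
  have heq : (ExteriorAlgebra.ιMulti ℚ 3).toMultilinearMap m
      = (ExteriorAlgebra.map N.subtype).toLinearMap (ExteriorAlgebra.ιMulti ℚ 3 mS) := by
    simp only [AlgHom.toLinearMap_apply, ExteriorAlgebra.map_apply_ιMulti]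
    rfl
  rw [heq]
  refine Submodule.mem_iSup_of_mem S (Submodule.mem_iSup_of_mem hScard ?_)
  exact Submodule.mem_map_of_mem ((ExteriorAlgebra.ιMulti_range ℚ 3) ⟨mS, rfl⟩)
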